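/- Let (J,γ) be a nilpotent metrised real Jordan algebra whose trace form γ is definite (positive definite or negative definite). Then either dim J ≤ 1 (in which case the multiplication of J is identically zero), or (J,γ) is reducible, i.e., J is the direct sum of two nonzero mutually γ-orthogonal ideals. In particular, an irreducible nilpotent metrised Jordan algebra with definite trace form has dimension at most 1. -/

import Mathlib

open Module

/-- The central ascending series of a commutative algebra with multiplication `mul`:
`C₀ = {0}`, `C_{k+1} = {x : x∙y ∈ C_k for all y}`. -/
def cas {A : Type*} [AddCommGroup A] [Module ℝ A]
    (mul : A →ₗ[ℝ] A →ₗ[ℝ] A) : ℕ → Submodule ℝ A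
  | 0 => ⊥
  | (k + 1) =>
    { carrier := {x | ∀ y, mul x y ∈ cas mul k}
      add_mem' := fun {a b} ha hb y => by
        simpa [map_add, LinearMap.add_apply] using (cas mul k).add_mem (ha y) (hb y)
      zero_mem' := fun y => by simp
      smul_mem' := fun c a ha y => by
        simpa [map_smul, LinearMap.smul_apply] using (cas mul k).smul_mem c (ha y) }

/-- `(J,γ)` is reducible: `J` is the direct sum of two nonzero ideals that are mutually
`γ`-orthogonal. -/
def Reducible {J : Type*} [AddCommGroup J] [Module ℝ J]
    (mul : J →ₗ[ℝ] J →ₗ[ℝ] J) (γ : J →ₗ[ℝ] J →ₗ[ℝ] ℝ) : Prop :=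
  ∃ I I' : Submodule ℝ J, I ≠ ⊥ ∧ I' ≠ ⊥ ∧ IsCompl I I' ∧
    (∀ x ∈ I, ∀ y, mul x y ∈ I) ∧ (∀ x ∈ I', ∀ y, mul x y ∈ I') ∧
    (∀ x ∈ I, ∀ y ∈ I', γ x y = 0)

/-- a nilpotent metrised real Jordan algebra `(J,γ)` with definite trace form
either has `dim J ≤ 1` (in which case the multiplication is identically zero) or is
reducible. -/
theorem stmt_11 {J : Type*} [AddCommGroup J] [Module ℝ J] [FiniteDimensional ℝ J]
    (mul : J →ₗ[ℝ] J →ₗ[ℝ] J)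
    (hcomm : ∀ u v, mul u v = mul v u)
    (hjordan : ∀ u v, mul u (mul (mul u u) v) = mul (mul u u) (mul u v))
    (γ : J →ₗ[ℝ] J →ₗ[ℝ] ℝ)
    (hsymm : ∀ u v, γ u v = γ v u)
    (hnd : ∀ u, (∀ v, γ u v = 0) → u = 0)
    (htrace : ∀ u v w, γ (mul u v) w = γ u (mul v w))
    (hnilp : ∃ m, cas mul m = ⊤)
    (hdef : (∀ x : J, x ≠ 0 → 0 < γ x x) ∨ (∀ x : J, x ≠ 0 → γ x x < 0)) :
    (finrank ℝ J ≤ 1 ∧ ∀ x y : J, mul x y = 0) ∨ Reducible mul γ := by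
  have hrefl : γ.IsRefl := fun u v h => by rw [hsymm]; exact h
  have hdef0 : ∀ x : J, γ x x = 0 → x = 0 := by
    intro x hx
    by_contra hx0
    rcases hdef with h | h
    · exact (h x hx0).ne' hx
    · exact (h x hx0).ne hx
  have hres : ∀ W : Submodule ℝ J, (LinearMap.BilinForm.restrict γ W).Nondegenerate := by
    intro W
    constructor <;> intro x hx <;>
    (have := hx x
     simp only [LinearMap.BilinForm.restrict_apply] at this
     exact Subtype.ext (hdef0 _ this))
  set M : Submodule ℝ J := Submodule.span ℝ (Set.range fun p : J × J => mul p.1 p.2) with hMdef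
  have hMideal : ∀ x ∈ M, ∀ y, mul x y ∈ M := by
    intro x hx y
    induction hx using Submodule.span_induction with
    | mem z hz => exact Submodule.subset_span ⟨(z, y), rfl⟩
    | zero => simp
    | add a b _ _ ha hb => rw [map_add, LinearMap.add_apply]; exact M.add_mem ha hb
    | smul c a _ ha => rw [map_smul, LinearMap.smul_apply]; exact M.smul_mem c ha
  by_cases hM : M = ⊥
  · -- multiplication is zero
    have hmul0 : ∀ x y : J, mul x y = 0 := by
      intro x y
      have : mul x y ∈ M := Submodule.subset_span ⟨(x, y), rfl⟩
      rwa [hM, Submodule.mem_bot] at this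
    by_cases hdim : finrank ℝ J ≤ 1
    · exact Or.inl ⟨hdim, hmul0⟩
    · right
      push_neg at hdim
      obtain ⟨x, hx0⟩ : ∃ x : J, x ≠ 0 := by
        by_contra h
        push_neg at h
        have : (⊤ : Submodule ℝ J) = ⊥ := by
          rw [eq_bot_iff]; intro y _; simpa using h y
        have := finrank_top ℝ J ▸ (Submodule.finrank_eq_zero (R := ℝ) (S := ⊤)).2 this
        omega
      set I : Submodule ℝ J := Submodule.span ℝ {x}
      have hcompl : IsCompl I (LinearMap.BilinForm.orthogonal γ I) :=
        LinearMap.BilinForm.isCompl_orthogonal_of_restrict_nondegenerate (B := γ) hrefl (hres I)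
      refine ⟨I, LinearMap.BilinForm.orthogonal γ I, ?_, ?_, hcompl, ?_, ?_, ?_⟩
      · intro h
        apply hx0
        have hxI : x ∈ I := Submodule.mem_span_singleton_self x
        rw [h, Submodule.mem_bot] at hxI
        exact hxI
      · intro h
        have hIT : I = ⊤ := by
          have := hcompl.sup_eq_top
          rwa [h, sup_bot_eq] at this
        have : finrank ℝ I = 1 := finrank_span_singleton hx0
        rw [hIT, finrank_top] at this
        omega
      · intro a _ y; rw [hmul0]; exact I.zero_mem
      · intro a _ y; rw [hmul0]; exact (LinearMap.BilinForm.orthogonal γ I).zero_mem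
      · intro a ha y hy
        exact LinearMap.BilinForm.mem_orthogonal_iff.1 hy a ha
  · -- M ≠ ⊥
    right
    set Ann : Submodule ℝ J := LinearMap.ker mul with hAnndef
    have hAnnmem : ∀ x : J, x ∈ Ann ↔ ∀ y, mul x y = 0 := by
      intro x
      rw [hAnndef, LinearMap.mem_ker, LinearMap.ext_iff]
      simp
    have hOrth : LinearMap.BilinForm.orthogonal γ M = Ann := by
      apply le_antisymm
      · intro y hy
        rw [hAnnmem]
        intro u
        apply hnd
        intro v
        calc γ (mul y u) v = γ y (mul u v) := htrace y u v
          _ = γ (mul u v) y := hsymm _ _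
          _ = 0 := LinearMap.BilinForm.mem_orthogonal_iff.1 hy _
                (Submodule.subset_span ⟨(u, v), rfl⟩)
      · intro a ha
        rw [hAnnmem] at ha
        have key : ∀ n ∈ M, γ n a = 0 := by
          intro n hn
          induction hn using Submodule.span_induction with
          | mem z hz =>
            obtain ⟨⟨u, v⟩, rfl⟩ := hz
            rw [htrace, hcomm, ha, map_zero]
          | zero => simp
          | add p q _ _ hp hq => rw [map_add, LinearMap.add_apply, hp, hq, add_zero]
          | smul c p _ hp => rw [map_smul, LinearMap.smul_apply, hp, smul_zero]
        exact LinearMap.BilinForm.mem_orthogonal_iff.2 key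
    have hAnn_ne : Ann ≠ ⊥ := by
      intro hA
      have hcas : ∀ k, cas mul k = ⊥ := by
        intro k
        induction k with
        | zero => rfl
        | succ n ih =>
          rw [eq_bot_iff]
          intro x hx
          have : ∀ y, mul x y = 0 := by
            intro y
            have := hx y
            rwa [ih, Submodule.mem_bot] at this
          have : x ∈ Ann := (hAnnmem x).2 this
          rwa [hA] at this
      obtain ⟨m, hm⟩ := hnilp
      rw [hcas m] at hm
      exact hM (le_bot_iff.1 (by rw [hm]; exact le_top))
    have hcompl : IsCompl M (LinearMap.BilinForm.orthogonal γ M) :=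
      LinearMap.BilinForm.isCompl_orthogonal_of_restrict_nondegenerate (B := γ) hrefl (hres M)
    refine ⟨M, LinearMap.BilinForm.orthogonal γ M, hM, ?_, hcompl, hMideal, ?_, ?_⟩
    · rw [hOrth]; exact hAnn_ne
    · intro x hx y
      rw [hOrth] at hx ⊢
      rw [hAnnmem] at hx
      rw [hAnnmem]
      intro z
      rw [hx y]
      simp
    · intro x hx y hy
      exact LinearMap.BilinForm.mem_orthogonal_iff.1 hy x hx
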